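/- Restricted ML solution: with K₂₂ = U₂ᵀXAXᵀU₂ + σ²·1 and L₂(X,A,σ²) = log det K₂₂ + tr(K₂₂⁻¹C₂₂), the minimizer over X with XᵀZ = 0 and orthonormal columns, A diagonal positive semi-definite, and σ² > 0, is X̂ = U₂W_p, Â = diag(λ₁ − σ̂², ..., λ_p − σ̂²), σ̂² = (1/(n−d−p)) Σ_{j=p+1}^{n−d} λ_j, where λ₁ ≥ ... ≥ λ_{n−d} are the eigenvalues of C₂₂ = U₂ᵀCU₂ with orthonormal eigenvectors w_j and W_p = (w₁,...,w_p), provided λ_p > λ_j for some j > p. -/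

import Mathlib

open Matrix

/-- Negative log-likelihood `log det K + tr(K⁻¹ C)`. -/
noncomputable def negLogLik {m : ℕ} (K C : Matrix (Fin m) (Fin m) ℝ) : ℝ :=
  Real.log K.det + (K⁻¹ * C).trace

lemma log_ineq {k l : ℝ} (hk : 0 < k) (hl : 0 < l) :
    1 + Real.log l ≤ Real.log k + l / k := by
  have h : Real.log (l / k) ≤ l / k - 1 := Real.log_le_sub_one_of_pos (by positivity)
  rw [Real.log_div hl.ne' hk.ne'] at h
  linarith

lemma sq_doublyStochastic {e : ℕ} (M : Matrix (Fin e) (Fin e) ℝ)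
    (h1 : Mᵀ * M = 1) (h2 : M * Mᵀ = 1) :
    (fun i j => (M i j) ^ 2) ∈ doublyStochastic ℝ (Fin e) := by
  apply mem_doublyStochastic_iff_sum.mpr
  refine ⟨fun i j => sq_nonneg _, fun i => ?_, fun j => ?_⟩
  · have := congrFun (congrFun h2 i) i
    simp only [Matrix.mul_apply, Matrix.transpose_apply, Matrix.one_apply_eq] at this
    simpa [sq] using this
  · have := congrFun (congrFun h1 j) j
    simp only [Matrix.mul_apply, Matrix.transpose_apply, Matrix.one_apply_eq] at this
    simpa [sq] using this

lemma birkhoff_bound {e : ℕ} (c l : Fin e → ℝ) (hc : Monotone c) (hl : Antitone l)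
    (D : Matrix (Fin e) (Fin e) ℝ) (hD : D ∈ doublyStochastic ℝ (Fin e)) :
    ∑ i, c i * l i ≤ ∑ i, ∑ j, c i * l j * D i j := by
  obtain ⟨w, hw0, hw1, hwD⟩ := exists_eq_sum_perm_of_mem_doublyStochastic hD
  have hanti : Antivary c l := by
    intro i j hij
    rcases le_total i j with h | h
    · exact absurd (hl h) (not_le.mpr hij)
    · exact hc h
  have key : ∀ σ : Equiv.Perm (Fin e), ∑ i, c i * l i ≤ ∑ i, c i * l (σ i) :=
    fun σ => hanti.sum_mul_le_sum_mul_comp_perm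
  have hfin : ∑ σ : Equiv.Perm (Fin e), w σ * ∑ i, c i * l (σ i)
      = ∑ i, ∑ j, c i * l j * D i j := by
    have hD' : ∀ i j, D i j = ∑ σ : Equiv.Perm (Fin e), w σ * (if j = σ i then 1 else 0) := by
      intro i j
      rw [← hwD]
      simp only [Finset.sum_apply, Matrix.sum_apply, Matrix.smul_apply,
        Equiv.Perm.permMatrix, PEquiv.toMatrix_apply, Equiv.toPEquiv_apply,
        Option.mem_def, Option.some.injEq, smul_eq_mul]
      refine Finset.sum_congr rfl fun σ _ => ?_
      by_cases h : j = σ i <;> simp [h, eq_comm]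
    calc ∑ σ : Equiv.Perm (Fin e), w σ * ∑ i, c i * l (σ i)
        = ∑ σ : Equiv.Perm (Fin e), ∑ i, w σ * (c i * l (σ i)) := by
          simp [Finset.mul_sum]
      _ = ∑ i, ∑ σ : Equiv.Perm (Fin e), w σ * (c i * l (σ i)) := Finset.sum_comm
      _ = ∑ i, ∑ j, c i * l j * D i j := by
          refine Finset.sum_congr rfl fun i _ => ?_
          simp only [hD', Finset.mul_sum]
          rw [Finset.sum_comm]
          refine Finset.sum_congr rfl fun σ _ => ?_
          rw [Finset.sum_eq_single (σ i)]
          · simp [mul_comm, mul_assoc, mul_left_comm]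
          · intro b _ hb; simp [hb]
          · simp
  calc ∑ i, c i * l i = ∑ σ : Equiv.Perm (Fin e), w σ * ∑ i, c i * l i := by
        rw [← Finset.sum_mul, hw1, one_mul]
    _ ≤ ∑ σ : Equiv.Perm (Fin e), w σ * ∑ i, c i * l (σ i) :=
        Finset.sum_le_sum fun σ _ => mul_le_mul_of_nonneg_left (key σ) (hw0 σ)
    _ = ∑ i, ∑ j, c i * l j * D i j := hfin

lemma trace_diag_conj {e : ℕ} (c l : Fin e → ℝ) (M : Matrix (Fin e) (Fin e) ℝ) :
    (diagonal c * (M * diagonal l * Mᵀ)).trace = ∑ i, ∑ j, c i * l j * (M i j) ^ 2 := by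
  rw [Matrix.trace]
  refine Finset.sum_congr rfl fun i _ => ?_
  rw [Matrix.diag_apply, Matrix.diagonal_mul, Matrix.mul_apply, Finset.mul_sum]
  refine Finset.sum_congr rfl fun j _ => ?_
  rw [Matrix.mul_diagonal, Matrix.transpose_apply]
  ring

lemma trace_conj_diag {e : ℕ} (Q Wm : Matrix (Fin e) (Fin e) ℝ) (c l : Fin e → ℝ) :
    ((Q * diagonal c * Qᵀ) * (Wm * diagonal l * Wmᵀ)).trace
      = ∑ i, ∑ j, c i * l j * ((Qᵀ * Wm) i j) ^ 2 := by
  set S := Wm * diagonal l * Wmᵀ with hS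
  have h1 : (Q * diagonal c * Qᵀ) * S = (Q * diagonal c) * (Qᵀ * S) := by
    rw [Matrix.mul_assoc]
  rw [h1, Matrix.trace_mul_comm (Q * diagonal c) (Qᵀ * S), ← Matrix.mul_assoc,
    Matrix.trace_mul_comm (Qᵀ * S * Q) (diagonal c)]
  have h2 : diagonal c * (Qᵀ * S * Q) = diagonal c * ((Qᵀ * Wm) * diagonal l * (Qᵀ * Wm)ᵀ) := by
    rw [hS, Matrix.transpose_mul, Matrix.transpose_transpose]
    congr 1
    simp only [Matrix.mul_assoc]
  rw [h2, trace_diag_conj]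

lemma spectral_negLogLik {e : ℕ} (Q Wm : Matrix (Fin e) (Fin e) ℝ)
    (hQ : Qᵀ * Q = 1) (k l : Fin e → ℝ) (hk : ∀ i, 0 < k i) :
    negLogLik (Q * diagonal k * Qᵀ) (Wm * diagonal l * Wmᵀ)
      = ∑ i, Real.log (k i) + ∑ i, ∑ j, (k i)⁻¹ * l j * ((Qᵀ * Wm) i j) ^ 2 := by
  have hQ' : Q * Qᵀ = 1 := mul_eq_one_comm.mp hQ
  have hdet : (Q * diagonal k * Qᵀ).det = ∏ i, k i := by
    have h : (Q * diagonal k * Qᵀ).det = (Q.det * Qᵀ.det) * (∏ i, k i) := by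
      rw [Matrix.det_mul, Matrix.det_mul, Matrix.det_diagonal]; ring
    have h2 : Q.det * Qᵀ.det = 1 := by rw [← Matrix.det_mul, hQ']; simp
    rw [h, h2, one_mul]
  have hinv : (Q * diagonal k * Qᵀ)⁻¹ = Q * diagonal (fun i => (k i)⁻¹) * Qᵀ := by
    apply Matrix.inv_eq_right_inv
    have h3 : Q * diagonal k * Qᵀ * (Q * diagonal (fun i => (k i)⁻¹) * Qᵀ)
        = Q * (diagonal k * (Qᵀ * Q) * diagonal (fun i => (k i)⁻¹)) * Qᵀ := by
      simp only [Matrix.mul_assoc]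
    rw [h3, hQ, Matrix.mul_one, Matrix.diagonal_mul_diagonal]
    have h4 : (fun i => k i * (k i)⁻¹) = fun _ => (1:ℝ) := by
      funext i; exact mul_inv_cancel₀ (hk i).ne'
    rw [h4, Matrix.diagonal_one, Matrix.mul_one, hQ']
  rw [negLogLik, hdet, hinv, Real.log_prod (fun i _ => (hk i).ne'),
    trace_conj_diag Q Wm _ l]

lemma conj_expand {e p : ℕ} (hpe : p ≤ e) (Q : Matrix (Fin e) (Fin e) ℝ)
    (M : Matrix (Fin e) (Fin p) ℝ) (a : Fin p → ℝ)
    (hQM : ∀ (x : Fin e) (j : Fin p), Q x ⟨j.1, lt_of_lt_of_le j.2 hpe⟩ = M x j) :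
    M * diagonal a * Mᵀ
      = Q * diagonal (fun i : Fin e => if h : i.1 < p then a ⟨i.1, h⟩ else 0) * Qᵀ := by
  ext x y
  rw [Matrix.mul_apply, Matrix.mul_apply]
  simp only [Matrix.mul_diagonal, Matrix.transpose_apply]
  rw [← Finset.sum_subset (Finset.subset_univ
    ((Finset.univ : Finset (Fin p)).map ⟨fun j => (⟨j.1, lt_of_lt_of_le j.2 hpe⟩ : Fin e),
      by intro i j hij; simpa [Fin.ext_iff] using hij⟩))]
  · rw [Finset.sum_map]
    refine Finset.sum_congr rfl fun j _ => ?_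
    show _ = (Q x ⟨j.1, lt_of_lt_of_le j.2 hpe⟩ * (if h : j.1 < p then a ⟨j.1, h⟩ else 0)) * Q y ⟨j.1, lt_of_lt_of_le j.2 hpe⟩
    rw [dif_pos j.2, hQM, hQM]
  · intro i _ hi
    have hip : ¬ (i.1 < p) := by
      intro h
      exact hi (Finset.mem_map.mpr ⟨⟨i.1, h⟩, Finset.mem_univ _, Fin.ext rfl⟩)
    rw [dif_neg hip]
    ring

lemma exists_extension {e p : ℕ} (hpe : p ≤ e) (M : Matrix (Fin e) (Fin p) ℝ)
    (hM : Mᵀ * M = 1) :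
    ∃ Q : Matrix (Fin e) (Fin e) ℝ, Qᵀ * Q = 1 ∧
      ∀ (x : Fin e) (j : Fin p), Q x ⟨j.1, lt_of_lt_of_le j.2 hpe⟩ = M x j := by
  classical
  set E := EuclideanSpace ℝ (Fin e)
  let v : Fin e → E := fun i =>
    if h : i.1 < p then (WithLp.toLp 2 (fun x => M x ⟨i.1, h⟩) : EuclideanSpace ℝ (Fin e)) else 0
  let s : Set (Fin e) := {i | i.1 < p}
  have hinner : ∀ (i j : Fin e) (hi : i.1 < p) (hj : j.1 < p),
      inner ℝ (v i) (v j) = if i = j then 1 else 0 := by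
    intro i j hi hj
    have h1 : inner ℝ (v i) (v j) = ∑ x, M x ⟨i.1, hi⟩ * M x ⟨j.1, hj⟩ := by
      simp only [v, dif_pos hi, dif_pos hj]
      rw [PiLp.inner_apply]
      simp [RCLike.inner_apply, mul_comm]
    rw [h1]
    have h2 := congrFun (congrFun hM ⟨i.1, hi⟩) ⟨j.1, hj⟩
    rw [Matrix.mul_apply] at h2
    simp only [Matrix.transpose_apply] at h2
    rw [h2]
    by_cases h : i = j
    · subst h; simp
    · rw [Matrix.one_apply_ne, if_neg h]
      intro hc
      apply h
      have := congrArg Fin.val hc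
      exact Fin.ext this
  have horth : Orthonormal ℝ (s.restrict v) := by
    rw [orthonormal_iff_ite]
    rintro ⟨i, hi⟩ ⟨j, hj⟩
    show inner ℝ (v i) (v j) = _
    rw [hinner i j hi hj]
    by_cases h : i = j
    · subst h; simp
    · rw [if_neg h, if_neg (fun hc => h (Subtype.ext_iff.mp hc))]
  have hcard : Module.finrank ℝ E = Fintype.card (Fin e) := by
    simp [E, finrank_euclideanSpace_fin]
  obtain ⟨b, hb⟩ := horth.exists_orthonormalBasis_extension_of_card_eq hcard
  refine ⟨Matrix.of fun x i => b i x, ?_, ?_⟩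
  · ext i j
    rw [Matrix.mul_apply, Matrix.one_apply]
    have := (orthonormal_iff_ite.mp b.orthonormal) i j
    rw [PiLp.inner_apply] at this
    simp only [RCLike.inner_apply, starRingEnd_apply, star_trivial] at this
    rw [← this]
    exact Finset.sum_congr rfl fun x _ => mul_comm _ _
  · intro x j
    have hjs : (⟨j.1, lt_of_lt_of_le j.2 hpe⟩ : Fin e) ∈ s := j.2
    have h1 := hb _ hjs
    show b ⟨j.1, lt_of_lt_of_le j.2 hpe⟩ x = M x j
    rw [h1]
    simp only [v, dif_pos (show (j:ℕ) < p from j.2)]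

lemma card_filter_le {e p : ℕ} (hpe : p < e) :
    (Finset.univ.filter (fun j : Fin e => p ≤ (j : ℕ))).card = e - p := by
  have h : (Finset.univ.filter (fun j : Fin e => p ≤ (j : ℕ))) = Finset.Ici ⟨p, hpe⟩ := by
    ext j
    simp [Finset.mem_Ici, Fin.le_def]
  rw [h, Fin.card_Ici]

lemma l_pos {e : ℕ} (l : Fin e → ℝ) (W S : Matrix (Fin e) (Fin e) ℝ)
    (hW : Wᵀ * W = 1) (hS : S.PosDef) (hspec : S = W * diagonal l * Wᵀ)
    (i : Fin e) : 0 < l i := by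
  set x : Fin e → ℝ := W *ᵥ Pi.single i 1 with hx
  have hxne : x ≠ 0 := by
    intro h0
    have h1 : Wᵀ *ᵥ x = 0 := by rw [h0, Matrix.mulVec_zero]
    rw [hx, Matrix.mulVec_mulVec, hW, Matrix.one_mulVec] at h1
    have := congrFun h1 i
    simp at this
  have hq := hS.dotProduct_mulVec_pos hxne
  have hWSW : Wᵀ * S * W = diagonal l := by
    rw [hspec]
    calc Wᵀ * (W * diagonal l * Wᵀ) * W
        = (Wᵀ * W) * diagonal l * (Wᵀ * W) := by simp only [Matrix.mul_assoc]
      _ = diagonal l := by rw [hW, Matrix.one_mul, Matrix.mul_one]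
  have hval : star x ⬝ᵥ S *ᵥ x = l i := by
    have hsx : star x = x := by simp [hx]
    rw [hsx, hx, Matrix.mulVec_mulVec, dotProduct_mulVec,
      ← Matrix.vecMul_transpose, Matrix.vecMul_vecMul]
    rw [← Matrix.mul_assoc, hWSW]
    simp [Matrix.vecMul, dotProduct, Pi.single_apply, Matrix.diagonal]
  rw [hval] at hq
  exact hq

lemma sandwich {n m q : ℕ} (U : Matrix (Fin n) (Fin m) ℝ) (X : Matrix (Fin n) (Fin q) ℝ)
    (D : Matrix (Fin q) (Fin q) ℝ) :
    Uᵀ * (X * D * Xᵀ) * U = (Uᵀ * X) * D * (Uᵀ * X)ᵀ := by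
  rw [Matrix.transpose_mul, Matrix.transpose_transpose]
  simp only [Matrix.mul_assoc]

lemma add_smul_one {e : ℕ} (Q : Matrix (Fin e) (Fin e) ℝ) (hQ' : Q * Qᵀ = 1)
    (A : Fin e → ℝ) (σ : ℝ) :
    Q * diagonal A * Qᵀ + σ • (1 : Matrix (Fin e) (Fin e) ℝ)
      = Q * diagonal (fun i => A i + σ) * Qᵀ := by
  have h1 : diagonal (fun i => A i + σ) = diagonal A + σ • (1 : Matrix (Fin e) (Fin e) ℝ) := by
    rw [Matrix.smul_one_eq_diagonal, ← Matrix.diagonal_add]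
  rw [h1, Matrix.mul_add, Matrix.add_mul]
  congr 1
  rw [Matrix.mul_smul, Matrix.mul_one, Matrix.smul_mul, hQ']

lemma sum_one_sq {e : ℕ} (c l : Fin e → ℝ) :
    ∑ i, ∑ j, c i * l j * ((1 : Matrix (Fin e) (Fin e) ℝ) i j) ^ 2 = ∑ i, c i * l i := by
  refine Finset.sum_congr rfl fun i _ => ?_
  rw [Finset.sum_eq_single i]
  · simp
  · intro b _ hb; rw [Matrix.one_apply_ne (Ne.symm hb)]; ring
  · simp

/-- Restricted maximum-likelihood solution for the latent variables: with
`K₂₂ = U₂ᵀXAXᵀU₂ + σ²·1` and `L₂ = log det K₂₂ + tr(K₂₂⁻¹C₂₂)`, the minimizer over `X`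
with `XᵀZ = 0` and orthonormal columns, `A` diagonal psd, `σ² > 0`, is `X̂ = U₂W_p`,
`Â = diag(λ₁−σ̂²,...,λ_p−σ̂²)`, `σ̂² = (1/(n−d−p))∑_{j>p} λ_j`, where `λ` are the sorted
eigenvalues of `C₂₂ = U₂ᵀCU₂` with orthonormal eigenvector matrix `W`. -/
theorem stmt15 {d e p : ℕ} (hp1 : 1 ≤ p) (hpe : p < e)
    (Z : Matrix (Fin (d + e)) (Fin d) ℝ) (U₂ : Matrix (Fin (d + e)) (Fin e) ℝ)
    (hZrank : IsUnit (Zᵀ * Z).det)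
    (hU2 : U₂ᵀ * U₂ = 1) (hU2Z : U₂ᵀ * Z = 0)
    (hcomplete : Z * (Zᵀ * Z)⁻¹ * Zᵀ + U₂ * U₂ᵀ = 1)
    (C : Matrix (Fin (d + e)) (Fin (d + e)) ℝ) (hC : C.PosDef)
    (l : Fin e → ℝ) (W : Matrix (Fin e) (Fin e) ℝ)
    (hlanti : Antitone l) (hW : Wᵀ * W = 1) (hW' : W * Wᵀ = 1)
    (hspec : U₂ᵀ * C * U₂ = W * Matrix.diagonal l * Wᵀ)
    (hex : ∃ j : Fin e, p ≤ (j : ℕ) ∧ l j < l ⟨p - 1, by omega⟩) :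
    let C₂₂ : Matrix (Fin e) (Fin e) ℝ := U₂ᵀ * C * U₂
    let σh : ℝ := (∑ j ∈ Finset.univ.filter (fun j : Fin e => p ≤ (j : ℕ)), l j) / (e - p)
    let Wp : Matrix (Fin e) (Fin p) ℝ := fun i j => W i ⟨j.1, lt_trans j.2 hpe⟩
    let Xh : Matrix (Fin (d + e)) (Fin p) ℝ := U₂ * Wp
    let ah : Fin p → ℝ := fun j => l ⟨j.1, lt_trans j.2 hpe⟩ - σh
    Xhᵀ * Xh = 1 ∧ Xhᵀ * Z = 0 ∧ (∀ j, 0 ≤ ah j) ∧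
      ∀ (X : Matrix (Fin (d + e)) (Fin p) ℝ) (a : Fin p → ℝ) (σ2 : ℝ),
        Xᵀ * X = 1 → Xᵀ * Z = 0 → (∀ j, 0 ≤ a j) → 0 < σ2 →
        negLogLik (U₂ᵀ * (Xh * Matrix.diagonal ah * Xhᵀ) * U₂ + σh • 1) C₂₂ ≤
          negLogLik (U₂ᵀ * (X * Matrix.diagonal a * Xᵀ) * U₂ + σ2 • 1) C₂₂ := by
  intro C₂₂ σh Wp Xh ah
  have hpe' : p ≤ e := hpe.le
  -- C₂₂ positive definite
  have hC22 : C₂₂.PosDef := by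
    refine Matrix.PosDef.of_dotProduct_mulVec_pos ?_ ?_
    · show C₂₂ᴴ = C₂₂
      have hCs : Cᵀ = C := hC.1
      show (U₂ᵀ * C * U₂)ᴴ = U₂ᵀ * C * U₂
      rw [Matrix.conjTranspose_eq_transpose_of_trivial, Matrix.transpose_mul,
        Matrix.transpose_mul, Matrix.transpose_transpose, hCs, Matrix.mul_assoc]
    · intro x hx
      have hUx : U₂ *ᵥ x ≠ 0 := by
        intro h0
        have h1 : U₂ᵀ *ᵥ (U₂ *ᵥ x) = 0 := by rw [h0, Matrix.mulVec_zero]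
        rw [Matrix.mulVec_mulVec, hU2, Matrix.one_mulVec] at h1
        exact hx h1
      have hq := hC.dotProduct_mulVec_pos hUx
      have heq : star x ⬝ᵥ C₂₂ *ᵥ x = star (U₂ *ᵥ x) ⬝ᵥ C *ᵥ (U₂ *ᵥ x) := by
        have hsx : star x = x := by simp
        have hsUx : star (U₂ *ᵥ x) = U₂ *ᵥ x := by simp
        rw [hsx, hsUx]
        show x ⬝ᵥ (U₂ᵀ * C * U₂) *ᵥ x = (U₂ *ᵥ x) ⬝ᵥ C *ᵥ (U₂ *ᵥ x)
        rw [Matrix.mul_assoc, ← Matrix.mulVec_mulVec, dotProduct_mulVec x U₂ᵀ,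
          Matrix.vecMul_transpose, Matrix.mulVec_mulVec]
      rw [heq]
      exact hq
  have hl0 : ∀ i, 0 < l i := l_pos l W C₂₂ hW hC22 hspec
  -- σh facts
  set T : ℝ := ∑ j ∈ Finset.univ.filter (fun j : Fin e => p ≤ (j : ℕ)), l j with hT_def
  have hfil_ne : (⟨p, hpe⟩ : Fin e) ∈ Finset.univ.filter (fun j : Fin e => p ≤ (j : ℕ)) := by
    simp
  have hT_pos : 0 < T := Finset.sum_pos (fun i _ => hl0 i) ⟨⟨p, hpe⟩, hfil_ne⟩
  have hc_pos : (0:ℝ) < (e:ℝ) - p := by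
    have : (p:ℝ) < e := by exact_mod_cast hpe
    linarith
  have hσh : σh = T / ((e:ℝ) - p) := rfl
  have hσh_pos : 0 < σh := by rw [hσh]; exact div_pos hT_pos hc_pos
  have hcard : ((Finset.univ.filter (fun j : Fin e => p ≤ (j : ℕ))).card : ℝ) = (e:ℝ) - p := by
    rw [card_filter_le hpe, Nat.cast_sub hpe']
  have hTσ : T = ((e:ℝ) - p) * σh := by
    rw [hσh]
    field_simp
  have hσh_le : σh ≤ l ⟨p, hpe⟩ := by
    have hTle : T ≤ ((e:ℝ) - p) * l ⟨p, hpe⟩ := by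
      have h1 : T ≤ ∑ _j ∈ Finset.univ.filter (fun j : Fin e => p ≤ (j : ℕ)), l ⟨p, hpe⟩ := by
        refine Finset.sum_le_sum fun i hi => ?_
        refine hlanti ?_
        rw [Fin.le_def]
        exact (Finset.mem_filter.mp hi).2
      rw [Finset.sum_const, nsmul_eq_mul, hcard] at h1
      exact h1
    rw [hσh, div_le_iff₀ hc_pos]
    linarith
  have hah0 : ∀ j, 0 ≤ ah j := by
    intro j
    have h1 : l ⟨p, hpe⟩ ≤ l ⟨j.1, lt_trans j.2 hpe⟩ := by
      refine hlanti ?_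
      rw [Fin.le_def]
      exact j.2.le
    show 0 ≤ l ⟨j.1, lt_trans j.2 hpe⟩ - σh
    linarith
  -- orthonormality of Wp and Xh
  have hU2Wp : U₂ᵀ * Xh = Wp := by
    show U₂ᵀ * (U₂ * Wp) = Wp
    rw [← Matrix.mul_assoc, hU2, Matrix.one_mul]
  have hWp1 : Wpᵀ * Wp = 1 := by
    ext i j
    have h2 := congrFun (congrFun hW ⟨i.1, lt_trans i.2 hpe⟩) ⟨j.1, lt_trans j.2 hpe⟩
    rw [Matrix.mul_apply] at h2
    simp only [Matrix.transpose_apply] at h2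
    rw [Matrix.mul_apply]
    simp only [Matrix.transpose_apply]
    show (∑ x, W x ⟨i.1, lt_trans i.2 hpe⟩ * W x ⟨j.1, lt_trans j.2 hpe⟩) = _
    rw [h2]
    by_cases h : i = j
    · subst h; simp
    · rw [Matrix.one_apply_ne, Matrix.one_apply_ne h]
      intro hc
      apply h
      have := congrArg Fin.val hc
      exact Fin.ext this
  have hXh1 : Xhᵀ * Xh = 1 := by
    show (U₂ * Wp)ᵀ * (U₂ * Wp) = 1
    rw [Matrix.transpose_mul]
    calc Wpᵀ * U₂ᵀ * (U₂ * Wp) = Wpᵀ * (U₂ᵀ * U₂) * Wp := by simp only [Matrix.mul_assoc]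
      _ = 1 := by rw [hU2, Matrix.mul_one, hWp1]
  have hXhZ : Xhᵀ * Z = 0 := by
    show (U₂ * Wp)ᵀ * Z = 0
    rw [Matrix.transpose_mul, Matrix.mul_assoc, hU2Z, Matrix.mul_zero]
  refine ⟨hXh1, hXhZ, hah0, ?_⟩
  intro X a σ2 hX hXZ ha hσ2
  -- LHS spectral form
  set khat : Fin e → ℝ := fun i => (if h : i.1 < p then ah ⟨i.1, h⟩ else 0) + σh with hkhat_def
  have hkhat_pos : ∀ i, 0 < khat i := by
    intro i
    show 0 < (if h : i.1 < p then ah ⟨i.1, h⟩ else 0) + σh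
    by_cases h : i.1 < p
    · rw [dif_pos h]; have := hah0 ⟨i.1, h⟩; linarith
    · rw [dif_neg h]; linarith
  have hkhat_lt : ∀ i (h : i.1 < p), khat i = l i := by
    intro i h
    show (if h' : i.1 < p then ah ⟨i.1, h'⟩ else 0) + σh = l i
    rw [dif_pos h]
    show (l ⟨i.1, lt_trans h hpe⟩ - σh) + σh = l i
    have : (⟨i.1, lt_trans h hpe⟩ : Fin e) = i := Fin.ext rfl
    rw [this]; ring
  have hkhat_ge : ∀ i, ¬ (i.1 < p) → khat i = σh := by
    intro i h
    show (if h' : i.1 < p then ah ⟨i.1, h'⟩ else 0) + σh = σh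
    rw [dif_neg h, zero_add]
  have hKhat : U₂ᵀ * (Xh * Matrix.diagonal ah * Xhᵀ) * U₂ + σh • 1
      = W * diagonal khat * Wᵀ := by
    rw [sandwich, hU2Wp,
      conj_expand hpe' W Wp ah (fun x j => rfl), add_smul_one W hW']
  have hLHS : negLogLik (U₂ᵀ * (Xh * Matrix.diagonal ah * Xhᵀ) * U₂ + σh • 1) C₂₂
      = ∑ i, Real.log (khat i) + ∑ i, (khat i)⁻¹ * l i := by
    have hC22eq : C₂₂ = W * diagonal l * Wᵀ := hspec
    rw [hKhat, hC22eq, spectral_negLogLik W W hW khat l hkhat_pos, hW, sum_one_sq]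
  -- RHS spectral form
  set M₀ : Matrix (Fin e) (Fin p) ℝ := U₂ᵀ * X with hM₀_def
  have hM₀ : M₀ᵀ * M₀ = 1 := by
    have hZX : Zᵀ * X = 0 := by
      have := congrArg Matrix.transpose hXZ
      rwa [Matrix.transpose_mul, Matrix.transpose_transpose, Matrix.transpose_zero] at this
    have hUU : U₂ * U₂ᵀ = 1 - Z * (Zᵀ * Z)⁻¹ * Zᵀ := by
      rw [← hcomplete]; abel
    show (U₂ᵀ * X)ᵀ * (U₂ᵀ * X) = 1
    rw [Matrix.transpose_mul, Matrix.transpose_transpose]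
    calc Xᵀ * U₂ᵀᵀ * (U₂ᵀ * X) = Xᵀ * (U₂ * U₂ᵀ) * X := by
          rw [Matrix.transpose_transpose]; simp only [Matrix.mul_assoc]
      _ = Xᵀ * X - Xᵀ * (Z * (Zᵀ * Z)⁻¹ * Zᵀ) * X := by
          rw [hUU, Matrix.mul_sub, Matrix.sub_mul, Matrix.mul_one]
      _ = 1 := by
          have hz : Xᵀ * (Z * (Zᵀ * Z)⁻¹ * Zᵀ) * X = 0 := by
            calc Xᵀ * (Z * (Zᵀ * Z)⁻¹ * Zᵀ) * X
                = (Xᵀ * Z) * ((Zᵀ * Z)⁻¹ * (Zᵀ * X)) := by simp only [Matrix.mul_assoc]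
              _ = 0 := by rw [hXZ, Matrix.zero_mul]
          rw [hz, hX, sub_zero]
  set τ : Equiv.Perm (Fin p) := Tuple.sort (fun i => -(a i)) with hτ_def
  have ha' : Antitone (fun j => a (τ j)) := by
    have hmono := Tuple.monotone_sort (fun i => -(a i))
    intro i j hij
    have := hmono hij
    simp only [Function.comp_apply] at this
    exact le_of_neg_le_neg this
  set M : Matrix (Fin e) (Fin p) ℝ := Matrix.of (fun x j => M₀ x (τ j)) with hM_def
  have hM : Mᵀ * M = 1 := by
    ext i j
    have h2 := congrFun (congrFun hM₀ (τ i)) (τ j)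
    rw [Matrix.mul_apply] at h2
    simp only [Matrix.transpose_apply] at h2
    rw [Matrix.mul_apply]
    simp only [Matrix.transpose_apply]
    show (∑ x, M₀ x (τ i) * M₀ x (τ j)) = _
    rw [h2]
    by_cases h : i = j
    · subst h; simp
    · rw [Matrix.one_apply_ne, Matrix.one_apply_ne h]
      intro hc
      exact h (τ.injective hc)
  have hMM : M * diagonal (fun j => a (τ j)) * Mᵀ = M₀ * diagonal a * M₀ᵀ := by
    ext x y
    rw [Matrix.mul_apply, Matrix.mul_apply]
    simp only [Matrix.mul_diagonal, Matrix.transpose_apply]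
    exact Equiv.sum_comp τ (fun j => M₀ x j * a j * M₀ y j)
  obtain ⟨Q, hQ, hQM⟩ := exists_extension hpe' M hM
  have hQ' : Q * Qᵀ = 1 := mul_eq_one_comm.mp hQ
  set k : Fin e → ℝ := fun i => (if h : i.1 < p then a (τ ⟨i.1, h⟩) else 0) + σ2 with hk_def
  have hk_pos : ∀ i, 0 < k i := by
    intro i
    show 0 < (if h : i.1 < p then a (τ ⟨i.1, h⟩) else 0) + σ2
    by_cases h : i.1 < p
    · rw [dif_pos h]; have := ha (τ ⟨i.1, h⟩); linarith
    · rw [dif_neg h]; linarith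
  have hk_anti : Antitone k := by
    intro i j hij
    show (if h : j.1 < p then a (τ ⟨j.1, h⟩) else 0) + σ2
      ≤ (if h : i.1 < p then a (τ ⟨i.1, h⟩) else 0) + σ2
    by_cases hj : j.1 < p
    · have hi : i.1 < p := lt_of_le_of_lt hij hj
      rw [dif_pos hj, dif_pos hi]
      have : a (τ ⟨j.1, hj⟩) ≤ a (τ ⟨i.1, hi⟩) := ha' (by exact hij)
      linarith
    · rw [dif_neg hj]
      by_cases hi : i.1 < p
      · rw [dif_pos hi]; have := ha (τ ⟨i.1, hi⟩); linarith
      · rw [dif_neg hi]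
  have hK_eq : U₂ᵀ * (X * Matrix.diagonal a * Xᵀ) * U₂ + σ2 • 1 = Q * diagonal k * Qᵀ := by
    rw [sandwich, ← hM₀_def, ← hMM, conj_expand hpe' Q M (fun j => a (τ j)) hQM,
      add_smul_one Q hQ']
  have hRHS : negLogLik (U₂ᵀ * (X * Matrix.diagonal a * Xᵀ) * U₂ + σ2 • 1) C₂₂
      = ∑ i, Real.log (k i) + ∑ i, ∑ j, (k i)⁻¹ * l j * ((Qᵀ * W) i j) ^ 2 := by
    have hC22eq : C₂₂ = W * diagonal l * Wᵀ := hspec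
    rw [hK_eq, hC22eq, spectral_negLogLik Q W hQ k l hk_pos]
  -- doubly stochastic bound
  have hDS : (fun i j => ((Qᵀ * W) i j) ^ 2) ∈ doublyStochastic ℝ (Fin e) := by
    apply sq_doublyStochastic
    · calc (Qᵀ * W)ᵀ * (Qᵀ * W) = Wᵀ * (Q * Qᵀ) * W := by
            rw [Matrix.transpose_mul, Matrix.transpose_transpose]
            simp only [Matrix.mul_assoc]
        _ = 1 := by rw [hQ', Matrix.mul_one, hW]
    · calc (Qᵀ * W) * (Qᵀ * W)ᵀ = Qᵀ * (W * Wᵀ) * Q := by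
            rw [Matrix.transpose_mul, Matrix.transpose_transpose]
            simp only [Matrix.mul_assoc]
        _ = 1 := by rw [hW', Matrix.mul_one, hQ]
  have hc_mono : Monotone (fun i => (k i)⁻¹) := by
    intro i j hij
    exact inv_anti₀ (hk_pos j) (hk_anti hij)
  have hBB : ∑ i, (k i)⁻¹ * l i ≤ ∑ i, ∑ j, (k i)⁻¹ * l j * ((Qᵀ * W) i j) ^ 2 :=
    birkhoff_bound _ l hc_mono hlanti _ hDS
  -- pointwise comparison
  have hsum : ∑ i, Real.log (khat i) + ∑ i, (khat i)⁻¹ * l i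
      ≤ ∑ i, Real.log (k i) + ∑ i, (k i)⁻¹ * l i := by
    rw [← Finset.sum_add_distrib, ← Finset.sum_add_distrib,
      ← Finset.sum_filter_add_sum_filter_not Finset.univ (fun i : Fin e => i.1 < p)
        (fun i => Real.log (khat i) + (khat i)⁻¹ * l i),
      ← Finset.sum_filter_add_sum_filter_not Finset.univ (fun i : Fin e => i.1 < p)
        (fun i => Real.log (k i) + (k i)⁻¹ * l i)]
    have hfil_eq : Finset.univ.filter (fun i : Fin e => ¬ (i.1 < p))
        = Finset.univ.filter (fun j : Fin e => p ≤ (j : ℕ)) := by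
      ext i; simp [not_lt]
    refine add_le_add ?_ ?_
    · refine Finset.sum_le_sum fun i hi => ?_
      have hip : i.1 < p := (Finset.mem_filter.mp hi).2
      rw [hkhat_lt i hip]
      have h1 : (1:ℝ) + Real.log (l i) ≤ Real.log (k i) + l i / (k i) :=
        log_ineq (hk_pos i) (hl0 i)
      have h2 : (l i)⁻¹ * l i = 1 := inv_mul_cancel₀ (hl0 i).ne'
      have h3 : (k i)⁻¹ * l i = l i / k i := by rw [div_eq_mul_inv, mul_comm]
      rw [h2, h3]
      linarith
    · have hclosed : ∀ (σ : ℝ), σ ≠ 0 → (∀ i ∈ Finset.univ.filter (fun i : Fin e => ¬ (i.1 < p)),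
          Real.log (σ) + σ⁻¹ * l i = Real.log σ + σ⁻¹ * l i) := by intros; rfl
      have heq1 : ∑ i ∈ Finset.univ.filter (fun i : Fin e => ¬ (i.1 < p)),
          (Real.log (khat i) + (khat i)⁻¹ * l i) = ((e:ℝ) - p) * Real.log σh + σh⁻¹ * T := by
        rw [hfil_eq] at *
        rw [Finset.sum_congr rfl (fun i hi => by
          rw [hkhat_ge i (by simpa [not_lt] using (Finset.mem_filter.mp hi).2)])]
        rw [Finset.sum_add_distrib, Finset.sum_const, nsmul_eq_mul, hcard, ← Finset.mul_sum]
      have heq2 : ∑ i ∈ Finset.univ.filter (fun i : Fin e => ¬ (i.1 < p)),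
          (Real.log (k i) + (k i)⁻¹ * l i) = ((e:ℝ) - p) * Real.log σ2 + σ2⁻¹ * T := by
        rw [hfil_eq] at *
        have hkval : ∀ i ∈ Finset.univ.filter (fun j : Fin e => p ≤ (j : ℕ)), k i = σ2 := by
          intro i hi
          show (if h : i.1 < p then a (τ ⟨i.1, h⟩) else 0) + σ2 = σ2
          rw [dif_neg (by simpa [not_lt] using (Finset.mem_filter.mp hi).2), zero_add]
        rw [Finset.sum_congr rfl (fun i hi => by rw [hkval i hi])]
        rw [Finset.sum_add_distrib, Finset.sum_const, nsmul_eq_mul, hcard, ← Finset.mul_sum]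
      rw [heq1, heq2]
      have hkey : 1 + Real.log σh ≤ Real.log σ2 + σh / σ2 := log_ineq hσ2 hσh_pos
      have h4 : σh⁻¹ * T = (e:ℝ) - p := by
        rw [hTσ]; field_simp
      have h5 : σ2⁻¹ * T = ((e:ℝ) - p) * (σh / σ2) := by
        rw [hTσ]; field_simp
      have h6 : ((e:ℝ) - p) * (1 + Real.log σh) ≤ ((e:ℝ) - p) * (Real.log σ2 + σh / σ2) :=
        mul_le_mul_of_nonneg_left hkey hc_pos.le
      have h7 : ((e:ℝ) - p) * (1 + Real.log σh) = ((e:ℝ) - p) * Real.log σh + σh⁻¹ * T := by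
        rw [h4]; ring
      have h8 : ((e:ℝ) - p) * (Real.log σ2 + σh / σ2)
          = ((e:ℝ) - p) * Real.log σ2 + σ2⁻¹ * T := by
        rw [h5]; ring
      linarith [h6, h7, h8]
  rw [hLHS, hRHS]
  calc ∑ i, Real.log (khat i) + ∑ i, (khat i)⁻¹ * l i
      ≤ ∑ i, Real.log (k i) + ∑ i, (k i)⁻¹ * l i := hsum
    _ ≤ ∑ i, Real.log (k i) + ∑ i, ∑ j, (k i)⁻¹ * l j * ((Qᵀ * W) i j) ^ 2 :=
        add_le_add_right hBB _
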